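/- For each graph G in the family S_k^{(1)}(n) ∪ T_k^{(1)}(n), the signless Laplacian spectral radius satisfies q(G) ≥ 2n − 2k. -/

import Mathlib

open Classical SimpleGraph Matrix

noncomputable section

/-- Degree of a vertex (via `Set.ncard`, avoiding decidability assumptions). -/
noncomputable def gdeg {V : Type*} (G : SimpleGraph V) (v : V) : ℕ :=
  (G.neighborSet v).ncard

/-- A graph is Hamilton-connected if every two distinct vertices are joined by a
Hamiltonian path. -/
def HamConnected {V : Type*} (G : SimpleGraph V) : Prop :=
  ∀ u v : V, u ≠ v → ∃ p : G.Walk u v, p.IsHamiltonian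

/-- The signless Laplacian matrix `Q(G) = D(G) + A(G)`. -/
noncomputable def signlessLap {V : Type*} [Fintype V] [DecidableEq V] (G : SimpleGraph V) :
    Matrix V V ℝ :=
  Matrix.of fun i j => (if i = j then (gdeg G i : ℝ) else 0) + (if G.Adj i j then 1 else 0)

/-- The signless Laplacian spectral radius: largest eigenvalue of `Q(G)`. -/
noncomputable def qrad {V : Type*} [Fintype V] [DecidableEq V] (G : SimpleGraph V) : ℝ :=
  sSup (spectrum ℝ (signlessLap G))

/-- `S_n^k = K_k ∨ (K_{n-2k+1} + (k-1)K_1)`, realized on `Fin n`: vertices with value `< k`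
form the dominating clique `K_k`, vertices with value `≤ n-k` form the clique `K_{n-k+1}`,
and the remaining `k-1` vertices are adjacent exactly to the first `k` vertices. -/
noncomputable def Sgraph (n k : ℕ) : SimpleGraph (Fin n) :=
  SimpleGraph.fromRel (fun i j => i.val < k ∨ (i.val ≤ n - k ∧ j.val ≤ n - k))

/-- `T_n^k = K_2 ∨ (K_{n-k-1} + K_{k-1})`, realized on `Fin n`: vertices with value `< 2`
are the dominating `K_2`, values `≤ n-k` form the clique `K_{n-k+1}`, and values `> n-k`
(of which there are `k-1`) form a clique joined to the first two vertices. -/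
noncomputable def Tgraph (n k : ℕ) : SimpleGraph (Fin n) :=
  SimpleGraph.fromRel (fun i j =>
    i.val < 2 ∨ (i.val ≤ n - k ∧ j.val ≤ n - k) ∨ (n - k < i.val ∧ n - k < j.val))

/-- Edges of `S_n^k` (resp. `T_n^k`) with both endpoints of degree `n-1` or `n-k`,
i.e. both endpoints with value `≤ n-k`. -/
def E0 {n : ℕ} (G : SimpleGraph (Fin n)) (k : ℕ) : Set (Sym2 (Fin n)) :=
  {e | e ∈ G.edgeSet ∧ ∀ i ∈ e, i.val ≤ n - k}

/-- The family `𝒮_k^{(1)}(n)`. -/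
def SFam1 (n k : ℕ) : Set (SimpleGraph (Fin n)) :=
  {G | ∃ E' : Set (Sym2 (Fin n)), E' ⊆ E0 (Sgraph n k) k ∧ E'.ncard ≤ k * (k - 1) / 4 ∧
    G = (Sgraph n k).deleteEdges E'}

/-- The family `𝒯_k^{(1)}(n)`. -/
def TFam1 (n k : ℕ) : Set (SimpleGraph (Fin n)) :=
  {G | ∃ E' : Set (Sym2 (Fin n)), E' ⊆ E0 (Tgraph n k) k ∧ E'.ncard ≤ (k - 1) / 2 ∧
    G = (Tgraph n k).deleteEdges E'}

/-- Rayleigh-type upper bound: the quadratic form of a real symmetric matrix is bounded by the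
largest element of the spectrum times the norm. -/
lemma rayleigh_le {N : Type*} [Fintype N] [DecidableEq N] [Nonempty N]
    {M : Matrix N N ℝ} (hM : M.IsHermitian) (x : N → ℝ) :
    x ⬝ᵥ (M *ᵥ x) ≤ sSup (spectrum ℝ M) * (x ⬝ᵥ x) := by
  classical
  set U : Matrix N N ℝ := (hM.eigenvectorUnitary : Matrix N N ℝ) with hU
  set y : N → ℝ := Uᵀ *ᵥ x with hy
  have hstar : star U = Uᵀ := by
    rw [Matrix.star_eq_conjTranspose]
    ext i j
    simp [Matrix.conjTranspose_apply]
  have hUU : U * Uᵀ = 1 := by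
    rw [← hstar]
    exact (Matrix.mem_unitaryGroup_iff).mp hM.eigenvectorUnitary.2
  have hxx : y ⬝ᵥ y = x ⬝ᵥ x := by
    rw [hy, Matrix.dotProduct_mulVec, Matrix.vecMul_transpose, Matrix.mulVec_mulVec, hUU,
      Matrix.one_mulVec]
  have hquad : x ⬝ᵥ (M *ᵥ x) = ∑ i, hM.eigenvalues i * (y i * y i) := by
    conv_lhs => rw [hM.spectral_theorem, Unitary.conjStarAlgAut_apply, ← hU, hstar, Matrix.mul_assoc, ← Matrix.mulVec_mulVec,
      ← Matrix.mulVec_mulVec, Matrix.dotProduct_mulVec, ← Matrix.mulVec_transpose]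
    simp only [← hy, dotProduct, Matrix.mulVec_diagonal]
    refine Finset.sum_congr rfl fun i _ => ?_
    simp [RCLike.ofReal]
    ring
  set c := sSup (spectrum ℝ M) with hc
  have hmem : ∀ i, hM.eigenvalues i ≤ c := fun i =>
    le_csSup (Matrix.finite_real_spectrum.bddAbove) (hM.eigenvalues_mem_spectrum_real i)
  calc x ⬝ᵥ (M *ᵥ x) = ∑ i, hM.eigenvalues i * (y i * y i) := hquad
    _ ≤ ∑ i, c * (y i * y i) := by
        refine Finset.sum_le_sum fun i _ => ?_
        exact mul_le_mul_of_nonneg_right (hmem i) (mul_self_nonneg _)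
    _ = c * (y ⬝ᵥ y) := by simp [dotProduct, Finset.mul_sum]
    _ = c * (x ⬝ᵥ x) := by rw [hxx]

lemma sum_card_filter_eq {α β : Type*} (A : Finset α) (B : Finset β) (Q : α → β → Prop) :
    ∑ i ∈ A, (B.filter (fun j => Q i j)).card
      = ((A ×ˢ B).filter fun p => Q p.1 p.2).card := by
  simp only [Finset.card_filter]
  rw [Finset.sum_product]

lemma key_lemma (n k : ℕ) (hn : 5 ≤ n) (hk : 1 ≤ k) (hkn : 2 * k ≤ n)
    (H : SimpleGraph (Fin n)) (E' : Set (Sym2 (Fin n)))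
    (hE0 : ∀ e ∈ E', ∀ i ∈ e, Fin.val i ≤ n - k)
    (h1 : ∀ i j : Fin n, i.val ≤ n - k → j.val ≤ n - k → i ≠ j → H.Adj i j)
    (m : ℕ) (K : Finset (Fin n))
    (hKcard : K.card = m)
    (hKle : ∀ i ∈ K, i.val ≤ n - k)
    (h3 : ∀ i ∈ K, ∀ j : Fin n, n - k < j.val → H.Adj i j)
    (h4 : 4 * E'.ncard ≤ m * (k - 1)) :
    2 * (n : ℝ) - 2 * k ≤ qrad (H.deleteEdges E') := by
  classical
  set G := H.deleteEdges E' with hGdef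
  have hkn' : k ≤ n - k := by omega
  have han : n - k < n := by omega
  set a := n - k with ha
  set A : Finset (Fin n) := Finset.univ.filter (fun i => (i : ℕ) ≤ a) with hA
  have hAmem : ∀ i : Fin n, i ∈ A ↔ (i : ℕ) ≤ a := by intro i; simp [hA]
  have hAcard : A.card = a + 1 := by
    have : A = Finset.Iic (⟨a, han⟩ : Fin n) := by
      ext i; simp [hA, Finset.mem_Iic, Fin.le_def]
    rw [this, Fin.card_Iic]
  set B : Finset (Fin n) := Finset.univ.filter (fun j : Fin n => ¬ (j : ℕ) ≤ a) with hB
  have hBcard : B.card = k - 1 := by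
    have h := Finset.card_filter_add_card_filter_not
      (s := (Finset.univ : Finset (Fin n))) (p := fun i : Fin n => (i : ℕ) ≤ a)
    rw [Finset.card_univ, Fintype.card_fin, ← hA, ← hB] at h
    omega
  have hGadj : ∀ i j, G.Adj i j ↔ H.Adj i j ∧ s(i, j) ∉ E' := by
    intro i j; rw [hGdef]; exact SimpleGraph.deleteEdges_adj
  have hdeg : ∀ v, gdeg G v = (Finset.univ.filter (fun j => G.Adj v j)).card := by
    intro v
    have : G.neighborSet v = ↑(Finset.univ.filter (fun j => G.Adj v j)) := by
      ext w; simp [SimpleGraph.mem_neighborSet]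
    rw [gdeg, this, Set.ncard_coe_finset]
  set t := E'.ncard with ht
  set P := ((A ×ˢ A).filter fun p : Fin n × Fin n => G.Adj p.1 p.2).card with hP
  -- Claim 2 : (a+1)*a ≤ P + 2*t
  have hC2 : (a + 1) * a ≤ P + 2 * t := by
    have hdist : A.offDiag.card = (a + 1) * a := by
      rw [Finset.offDiag_card, hAcard, Nat.mul_succ]
      omega
    have hbadcard : ((A ×ˢ A).filter fun p : Fin n × Fin n => s(p.1, p.2) ∈ E').card ≤ 2 * t := by
      set BadF := (A ×ˢ A).filter fun p : Fin n × Fin n => s(p.1, p.2) ∈ E' with hBadF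
      have hfin : E'.Finite := Set.toFinite E'
      have himg : BadF.image (fun p : Fin n × Fin n => s(p.1, p.2)) ⊆ hfin.toFinset := by
        intro e he
        rw [Finset.mem_image] at he
        obtain ⟨p, hp, rfl⟩ := he
        rw [hBadF, Finset.mem_filter] at hp
        simpa using hp.2
      have himgcard : (BadF.image (fun p : Fin n × Fin n => s(p.1, p.2))).card ≤ t := by
        refine le_trans (Finset.card_le_card himg) ?_
        rw [ht, Set.ncard_eq_toFinset_card _ hfin]
      have hfiber : ∀ e ∈ BadF.image (fun p : Fin n × Fin n => s(p.1, p.2)),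
          (BadF.filter (fun p => s(p.1, p.2) = e)).card ≤ 2 := by
        intro e _
        induction e using Sym2.inductionOn with
        | hf u v =>
          refine le_trans (Finset.card_le_card (t := {(u, v), (v, u)}) ?_) ?_
          · intro p hp
            rw [Finset.mem_filter] at hp
            have := hp.2
            rw [Sym2.eq_iff] at this
            rcases this with ⟨h1', h2'⟩ | ⟨h1', h2'⟩
            · simp [Prod.ext_iff, h1', h2']
            · simp [Prod.ext_iff, h1', h2']
          · exact le_trans (Finset.card_insert_le _ _) (by simp)
      calc BadF.card ≤ 2 * (BadF.image (fun p : Fin n × Fin n => s(p.1, p.2))).card :=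
            Finset.card_le_mul_card_image _ 2 hfiber
        _ ≤ 2 * t := by omega
    have hsub : A.offDiag ⊆
        ((A ×ˢ A).filter fun p : Fin n × Fin n => G.Adj p.1 p.2) ∪
        ((A ×ˢ A).filter fun p : Fin n × Fin n => s(p.1, p.2) ∈ E') := by
      intro p hp
      rw [Finset.mem_offDiag] at hp
      obtain ⟨h1A, h2A, hpne⟩ := hp
      have hpA : p ∈ A ×ˢ A := Finset.mem_product.mpr ⟨h1A, h2A⟩
      have hHadj : H.Adj p.1 p.2 :=
        h1 p.1 p.2 ((hAmem p.1).mp h1A) ((hAmem p.2).mp h2A) hpne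
      by_cases hmem : s(p.1, p.2) ∈ E'
      · exact Finset.mem_union_right _ (Finset.mem_filter.mpr ⟨hpA, hmem⟩)
      · exact Finset.mem_union_left _
          (Finset.mem_filter.mpr ⟨hpA, (hGadj p.1 p.2).mpr ⟨hHadj, hmem⟩⟩)
    calc (a + 1) * a = A.offDiag.card := hdist.symm
      _ ≤ (((A ×ˢ A).filter fun p : Fin n × Fin n => G.Adj p.1 p.2) ∪
            ((A ×ˢ A).filter fun p : Fin n × Fin n => s(p.1, p.2) ∈ E')).card :=
          Finset.card_le_card hsub
      _ ≤ P + 2 * t := le_trans (Finset.card_union_le _ _) (by omega)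
  -- Claim 3 : P + m * (k-1) ≤ ∑ degrees
  have hC3 : P + m * (k - 1) ≤ ∑ i ∈ A, gdeg G i := by
    have hPsum : P = ∑ i ∈ A, (A.filter (fun j => G.Adj i j)).card :=
      by rw [hP]; convert (sum_card_filter_eq A A (fun i j => G.Adj i j)).symm
    have step : ∀ i ∈ A,
        (A.filter (fun j => G.Adj i j)).card + (if i ∈ K then k - 1 else 0) ≤ gdeg G i := by
      intro i hi
      rw [hdeg]
      by_cases hiK : i ∈ K
      · rw [if_pos hiK]
        have hdisj : Disjoint (A.filter (fun j => G.Adj i j)) B := by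
          rw [Finset.disjoint_left]
          intro j hj hjB
          rw [Finset.mem_filter] at hj
          rw [hB, Finset.mem_filter] at hjB
          exact hjB.2 ((hAmem j).mp hj.1)
        have hsub2 : (A.filter (fun j => G.Adj i j)) ∪ B ⊆
            Finset.univ.filter (fun j => G.Adj i j) := by
          intro j hj
          rw [Finset.mem_union] at hj
          rcases hj with hj | hj
          · rw [Finset.mem_filter] at hj ⊢
            exact ⟨Finset.mem_univ _, hj.2⟩
          · rw [hB, Finset.mem_filter] at hj
            have hjgt : a < (j : ℕ) := by omega
            have hHadj : H.Adj i j := h3 i hiK j hjgt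
            have hnot : s(i, j) ∉ E' := by
              intro hmem
              have := hE0 _ hmem j (Sym2.mem_mk_right i j)
              omega
            rw [Finset.mem_filter]
            exact ⟨Finset.mem_univ _, (hGadj i j).mpr ⟨hHadj, hnot⟩⟩
        calc (A.filter (fun j => G.Adj i j)).card + (k - 1)
            = (A.filter (fun j => G.Adj i j)).card + B.card := by rw [hBcard]
          _ = ((A.filter (fun j => G.Adj i j)) ∪ B).card :=
              (Finset.card_union_of_disjoint hdisj).symm
          _ ≤ _ := Finset.card_le_card hsub2
      · rw [if_neg hiK, Nat.add_zero]
        refine Finset.card_le_card ?_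
        intro j hj
        rw [Finset.mem_filter] at hj ⊢
        exact ⟨Finset.mem_univ _, hj.2⟩
    have hKA : K ⊆ A := fun i hi => (hAmem i).mpr (hKle i hi)
    calc P + m * (k - 1)
        = ∑ i ∈ A, ((A.filter (fun j => G.Adj i j)).card + (if i ∈ K then k - 1 else 0)) := by
          rw [Finset.sum_add_distrib, ← hPsum, Finset.sum_ite_mem,
            Finset.inter_eq_right.mpr hKA, Finset.sum_const, hKcard, smul_eq_mul]
      _ ≤ ∑ i ∈ A, gdeg G i := Finset.sum_le_sum step
  -- Spectral part
  haveI : Nonempty (Fin n) := ⟨⟨0, by omega⟩⟩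
  set x : Fin n → ℝ := fun i => if i ∈ A then 1 else 0 with hx
  have hherm : (signlessLap G).IsHermitian := by
    show (signlessLap G)ᴴ = signlessLap G
    ext i j
    simp only [Matrix.conjTranspose_apply, signlessLap, Matrix.of_apply, star_trivial]
    by_cases h : i = j
    · subst h; simp
    · have hadj : G.Adj j i ↔ G.Adj i j := SimpleGraph.adj_comm G j i
      simp [h, Ne.symm h, hadj]
  have hxM : ∀ M : Matrix (Fin n) (Fin n) ℝ, x ⬝ᵥ (M *ᵥ x) = ∑ i ∈ A, ∑ j ∈ A, M i j := by
    intro M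
    simp only [dotProduct, Matrix.mulVec, dotProduct, hx, ite_mul, one_mul,
      zero_mul, mul_ite, mul_one, mul_zero, Finset.sum_ite_mem, Finset.univ_inter]
  have hxq : x ⬝ᵥ (signlessLap G *ᵥ x) = (∑ i ∈ A, (gdeg G i : ℝ)) + P := by
    rw [hxM]
    simp only [signlessLap, Matrix.of_apply]
    rw [Finset.sum_congr rfl (fun i _ => Finset.sum_add_distrib), Finset.sum_add_distrib]
    congr 1
    · refine Finset.sum_congr rfl fun i hi => ?_
      rw [Finset.sum_ite_eq A i (fun _ => (gdeg G i : ℝ)), if_pos hi]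
    · rw [← Finset.sum_product']
      rw [hP]; convert Finset.sum_boole (fun x : Fin n × Fin n => G.Adj x.1 x.2) (A ×ˢ A)
  have hxx : x ⬝ᵥ x = ((a : ℝ) + 1) := by
    have h1' : ∀ i, x i * x i = if i ∈ A then (1 : ℝ) else 0 := by
      intro i; by_cases h : i ∈ A <;> simp [hx, h]
    rw [dotProduct, Finset.sum_congr rfl (fun i _ => h1' i), Finset.sum_boole]
    rw [Finset.filter_mem_eq_inter, Finset.univ_inter, hAcard]
    push_cast; ring
  have hray := rayleigh_le hherm x
  have hCtot : 2 * ((a + 1) * a) ≤ (∑ i ∈ A, gdeg G i) + P := by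
    set s := m * (k - 1) with hs
    set D := ∑ i ∈ A, gdeg G i with hD
    omega
  have hlow : (2 * (a : ℝ)) * ((a : ℝ) + 1) ≤ x ⬝ᵥ (signlessLap G *ᵥ x) := by
    rw [hxq]
    have hcast : ((2 * ((a + 1) * a) : ℕ) : ℝ) ≤ ((∑ i ∈ A, gdeg G i : ℕ) : ℝ) + (P : ℝ) := by
      push_cast [Nat.cast_le.mpr hCtot]
      exact_mod_cast Nat.cast_le.mpr hCtot
    calc (2 * (a : ℝ)) * ((a : ℝ) + 1) = ((2 * ((a + 1) * a) : ℕ) : ℝ) := by push_cast; ring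
      _ ≤ ((∑ i ∈ A, gdeg G i : ℕ) : ℝ) + (P : ℝ) := hcast
      _ = (∑ i ∈ A, (gdeg G i : ℝ)) + P := by push_cast; ring
  have hq : x ⬝ᵥ (signlessLap G *ᵥ x) ≤ qrad G * ((a : ℝ) + 1) := by
    rw [qrad, ← hxx]; exact hray
  have hpos : (0 : ℝ) < (a : ℝ) + 1 := by positivity
  have hfin : 2 * (a : ℝ) ≤ qrad G :=
    (mul_le_mul_iff_of_pos_right hpos).mp (le_trans hlow hq)
  have h2a : 2 * (n : ℝ) - 2 * k = 2 * (a : ℝ) := by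
    rw [ha, Nat.cast_sub (by omega : k ≤ n)]; ring
  rw [h2a]; exact hfin

/-- **Lemma 3.2.** For each `G ∈ 𝒮_k^{(1)}(n) ∪ 𝒯_k^{(1)}(n)`, `q(G) ≥ 2n - 2k`. -/
theorem qrad_ge_of_fam1 (n k : ℕ) (hn : 5 ≤ n) (hk : 1 ≤ k) (hkn : 2 * k ≤ n)
    (G : SimpleGraph (Fin n)) (hG : G ∈ SFam1 n k ∪ TFam1 n k) :
    2 * (n : ℝ) - 2 * k ≤ qrad G := by
  rcases hG with hG | hG
  · obtain ⟨E', hE', hcard, rfl⟩ := hG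
    refine key_lemma n k hn hk hkn _ E' (fun e he i hi => ((hE' he).2) i hi)
      (fun i j hi hj hij => ?_) k (Finset.univ.filter (fun i : Fin n => (i : ℕ) < k))
      ?_ (fun i hi => ?_) (fun i hi j hj => ?_) ?_
    · exact (SimpleGraph.fromRel_adj _ _ _).mpr ⟨hij, Or.inl (Or.inr ⟨hi, hj⟩)⟩
    · have : Finset.univ.filter (fun i : Fin n => (i : ℕ) < k)
          = Finset.Iio (⟨k, by omega⟩ : Fin n) := by
        ext i; simp [Finset.mem_Iio, Fin.lt_def]
      rw [this, Fin.card_Iio]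
    · rw [Finset.mem_filter] at hi; omega
    · rw [Finset.mem_filter] at hi
      refine (SimpleGraph.fromRel_adj _ _ _).mpr ⟨?_, Or.inl (Or.inl hi.2)⟩
      intro h; rw [h] at hi; omega
    · calc 4 * E'.ncard ≤ 4 * (k * (k - 1) / 4) := by omega
        _ ≤ k * (k - 1) := Nat.mul_div_le _ 4
  · obtain ⟨E', hE', hcard, rfl⟩ := hG
    refine key_lemma n k hn hk hkn _ E' (fun e he i hi => ((hE' he).2) i hi)
      (fun i j hi hj hij => ?_) 2 (Finset.univ.filter (fun i : Fin n => (i : ℕ) < 2))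
      ?_ (fun i hi => ?_) (fun i hi j hj => ?_) ?_
    · exact (SimpleGraph.fromRel_adj _ _ _).mpr ⟨hij, Or.inl (Or.inr (Or.inl ⟨hi, hj⟩))⟩
    · have : Finset.univ.filter (fun i : Fin n => (i : ℕ) < 2)
          = Finset.Iio (⟨2, by omega⟩ : Fin n) := by
        ext i; simp [Finset.mem_Iio, Fin.lt_def]
      rw [this, Fin.card_Iio]
    · rw [Finset.mem_filter] at hi; omega
    · rw [Finset.mem_filter] at hi
      refine (SimpleGraph.fromRel_adj _ _ _).mpr ⟨?_, Or.inl (Or.inl hi.2)⟩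
      intro h; rw [h] at hi; omega
    · calc 4 * E'.ncard ≤ 4 * ((k - 1) / 2) := by omega
        _ ≤ 2 * (k - 1) := by
            have := Nat.mul_div_le (k - 1) 2
            omega
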